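/- Let (A_i)_{i∈κ} be infinite Boolean algebras with π(A_i) = λ_i ≤ λ for all i, D an ultrafilter on κ, and A = ∏ A_i / D. Assume every f ∈ ∏_{i∈κ} λ_i is bounded modulo D by some α < λ, and that θ^κ ≤ λ for every cardinal θ < λ. Then |∏_{i∈κ} λ_i / D| ≤ λ. -/

import Mathlib

open Cardinal

universe u v

/-- The algebraic density `π A` of a Boolean algebra: the least cardinality of a
dense subset of `A \ {⊥}`. -/
noncomputable def piDensity (A : Type v) [BooleanAlgebra A] : Cardinal.{v} :=
  sInf {c | ∃ X : Set A, (∀ x ∈ X, x ≠ ⊥) ∧ (∀ a : A, a ≠ ⊥ → ∃ x ∈ X, x ≤ a) ∧ c = #X}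

section BUP

variable {ι : Type u} (D : Ultrafilter ι) (A : ι → Type u) [∀ i, BooleanAlgebra (A i)]

instance piBooleanRing : BooleanRing (∀ i, AsBoolRing (A i)) :=
  { Pi.ring with isIdempotentElem := fun f => funext fun i => BooleanRing.mul_self (a := f i) }

/-- The ideal of elements vanishing `D`-almost everywhere. -/
def upIdeal : Ideal (∀ i, AsBoolRing (A i)) where
  carrier := {f | {i | f i = 0} ∈ D}
  zero_mem' := by
    have : {i | (0 : ∀ i, AsBoolRing (A i)) i = 0} = Set.univ := by ext i; simp
    simp only [Set.mem_setOf_eq] at *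
    exact this ▸ Filter.univ_mem
  add_mem' := by
    intro f g hf hg
    filter_upwards [hf, hg] with i h1 h2
    simp only [Pi.add_apply, h1, h2, add_zero]
  smul_mem' := by
    intro c f hf
    filter_upwards [hf] with i h1
    simp only [smul_eq_mul, Pi.mul_apply, h1, mul_zero]

instance upQuotBooleanRing : BooleanRing ((∀ i, AsBoolRing (A i)) ⧸ upIdeal D A) :=
  { (inferInstance : CommRing ((∀ i, AsBoolRing (A i)) ⧸ upIdeal D A)) with
    isIdempotentElem := fun a => by
      obtain ⟨f, rfl⟩ := Ideal.Quotient.mk_surjective a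
      rw [IsIdempotentElem, ← map_mul, BooleanRing.mul_self] }

/-- The Boolean ultraproduct `∏ᵢ Aᵢ / D`. -/
def BUP : Type u := AsBoolAlg ((∀ i, AsBoolRing (A i)) ⧸ upIdeal D A)

noncomputable instance : BooleanAlgebra (BUP D A) :=
  inferInstanceAs (BooleanAlgebra (AsBoolAlg _))

end BUP

section cardUP

variable {ι : Type u} (D : Ultrafilter ι)

/-- Set-theoretic ultraproduct of a family of cardinals, seen as the quotient of the
product of the corresponding sets of ordinals by `D`-almost-everywhere equality. -/
def cardSetoid (lam : ι → Cardinal.{u}) :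
    Setoid (∀ i, (lam i).ord.ToType) where
  r f g := {i | f i = g i} ∈ D
  iseqv := by
    refine ⟨fun f => by
      have : {i | f i = f i} = Set.univ := by ext i; simp
      rw [this]; exact Filter.univ_mem, fun {f g} h => ?_, fun {f g h} h1 h2 => ?_⟩
    · filter_upwards [h] with i hi using hi.symm
    · filter_upwards [h1, h2] with i hi1 hi2 using hi1.trans hi2

/-- The cardinality of the ultraproduct `∏ᵢ λᵢ / D` of a family of cardinals. -/
noncomputable def cardUP (lam : ι → Cardinal.{u}) : Cardinal.{u} :=
  #(Quotient (cardSetoid D lam))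

end cardUP

lemma piDensity_mem (A : Type v) [BooleanAlgebra A] :
    ∃ X : Set A, (∀ x ∈ X, x ≠ ⊥) ∧ (∀ a : A, a ≠ ⊥ → ∃ x ∈ X, x ≤ a) ∧ piDensity A = #X := by
  have hne : {c | ∃ X : Set A, (∀ x ∈ X, x ≠ ⊥) ∧ (∀ a : A, a ≠ ⊥ → ∃ x ∈ X, x ≤ a) ∧
      c = #X}.Nonempty :=
    ⟨#{a : A | a ≠ ⊥}, {a | a ≠ ⊥}, fun _ hx => hx, fun a ha => ⟨a, ha, le_rfl⟩, rfl⟩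
  exact csInf_mem hne

lemma aleph0_le_piDensity (A : Type v) [BooleanAlgebra A] [Infinite A] :
    ℵ₀ ≤ piDensity A := by
  obtain ⟨X, hX0, hXd, hXc⟩ := piDensity_mem A
  rw [hXc]
  by_contra h
  push_neg at h
  have key : ∀ a b : A, {x : X | (x : A) ≤ a} ⊆ {x : X | (x : A) ≤ b} → a ≤ b := by
    intro a b hab
    by_contra hle
    have h1 : a \ b ≠ ⊥ := fun hh => hle (sdiff_eq_bot_iff.mp hh)
    obtain ⟨x, hx, hxab⟩ := hXd _ h1
    have hxa : x ≤ a := hxab.trans sdiff_le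
    have hxb : x ≤ b := hab (show ((⟨x, hx⟩ : X) : A) ≤ a from hxa)
    have hxbc : x ≤ bᶜ := hxab.trans (by rw [sdiff_eq]; exact inf_le_right)
    have : x ≤ ⊥ := by
      have := le_inf hxb hxbc
      rwa [inf_compl_eq_bot] at this
    exact hX0 x hx (le_bot_iff.mp this)
  have hinj : Function.Injective (fun a : A => {x : X | (x : A) ≤ a}) := by
    intro a b hab
    exact le_antisymm (key a b hab.le) (key b a hab.ge)
  have h2 : #A ≤ 2 ^ #X := by
    calc #A ≤ #(Set X) := Cardinal.mk_le_of_injective hinj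
    _ = 2 ^ #X := Cardinal.mk_set
  have h3 : (2 : Cardinal) ^ #X < ℵ₀ :=
    Cardinal.power_lt_aleph0 (by exact_mod_cast Cardinal.nat_lt_aleph0 2) h
  exact absurd ((Cardinal.aleph0_le_mk A).trans h2) (not_le.mpr h3)

/-- Claim 5 / Claim 1 of Theorem 1.1: if each `f ∈ ∏ᵢ λᵢ` (`λᵢ = π Aᵢ ≤ lam`) is bounded
modulo `D` below `lam`, and `θ ^ κ ≤ lam` for all `θ < lam`, then `|∏ λᵢ / D| ≤ lam`. -/
theorem cardUP_le_of_bounded {ι : Type u} (D : Ultrafilter ι) (A : ι → Type u)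
    [∀ i, BooleanAlgebra (A i)] [∀ i, Infinite (A i)] (lam : Cardinal.{u})
    (hle : ∀ i, piDensity (A i) ≤ lam)
    (hbd : ∀ f : ι → Ordinal.{u}, (∀ i, f i < (piDensity (A i)).ord) →
      ∃ α < lam.ord, {i | f i ≤ α} ∈ D)
    (hpow : ∀ θ : Cardinal.{u}, θ < lam → θ ^ #ι ≤ lam) :
    cardUP D (fun i => piDensity (A i)) ≤ lam := by
  set lam' : ι → Cardinal.{u} := fun i => piDensity (A i) with hlam'
  have hι : Nonempty ι := Filter.nonempty_of_neBot (D : Filter ι)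
  obtain ⟨i₀⟩ := hι
  have hlam : ℵ₀ ≤ lam := le_trans (aleph0_le_piDensity (A i₀)) (hle i₀)
  have hnz : ∀ i, (lam' i).ord ≠ 0 := by
    intro i h0
    have : lam' i = 0 := by
      rw [← Cardinal.card_ord (lam' i), h0, Ordinal.card_zero]
    exact absurd this (ne_of_gt (lt_of_lt_of_le Cardinal.aleph0_pos
      (aleph0_le_piDensity (A i))))
  have hne : ∀ i, Nonempty ((lam' i).ord.ToType) := fun i =>
    Ordinal.toType_nonempty_iff_ne_zero.mpr (hnz i)
  set e : ∀ i, ((lam' i).ord.ToType ≃o Set.Iio (lam' i).ord) :=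
    fun i => (Ordinal.ToType.mk).symm with he
  -- the bounding type
  set T : Type (u + 1) := Σ α : Set.Iio lam.ord, (ι → Set.Iic (α : Ordinal.{u})) with hT
  set Q : Type u := Quotient (cardSetoid D lam') with hQ
  -- the surjection
  set Φ : T → ULift.{u + 1} Q := fun p => ⟨Quotient.mk (cardSetoid D lam')
    (fun i => if h : ((p.2 i : Ordinal.{u}) < (lam' i).ord) then (e i).symm ⟨p.2 i, h⟩
      else Classical.arbitrary _)⟩ with hΦ
  have hsurj : Function.Surjective Φ := by
    rintro ⟨q⟩
    induction q using Quotient.inductionOn with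
    | h f =>
      set f' : ι → Ordinal.{u} := fun i => ((e i) (f i) : Ordinal.{u}) with hf'def
      have hf' : ∀ i, f' i < (lam' i).ord := fun i => ((e i) (f i)).2
      obtain ⟨α, hα, hS⟩ := hbd f' hf'
      refine ⟨⟨⟨α, hα⟩, fun i => if h : f' i ≤ α then ⟨f' i, h⟩
        else ⟨0, zero_le (a := α)⟩⟩, ?_⟩
      simp only [hΦ]
      congr 1
      refine Quotient.sound ?_
      show {i | _ = f i} ∈ D
      filter_upwards [hS] with i hi
      have hval : ((if h : f' i ≤ α then (⟨f' i, h⟩ : Set.Iic α)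
          else ⟨0, zero_le (a := α)⟩ : Set.Iic α) : Ordinal.{u}) = f' i := by
        rw [dif_pos hi]
      simp only [hval, hf' i, dif_pos]
      have : (⟨f' i, hf' i⟩ : Set.Iio (lam' i).ord) = (e i) (f i) := Subtype.ext rfl
      rw [this, OrderIso.symm_apply_apply]
  -- cardinality computation
  rw [← Cardinal.lift_le.{u + 1}]
  have h1 : Cardinal.lift.{u + 1} (cardUP D lam') = #(ULift.{u + 1} Q) :=
    (Cardinal.mk_uLift _).symm
  rw [show cardUP D (fun i => piDensity (A i)) = cardUP D lam' from rfl, h1]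
  refine le_trans (Cardinal.mk_le_of_surjective hsurj) ?_
  have hfiber : ∀ α : Set.Iio lam.ord,
      #(ι → Set.Iic (α : Ordinal.{u})) ≤ Cardinal.lift.{u + 1} lam := by
    intro α
    have hIic : #(Set.Iic (α : Ordinal.{u})) =
        Cardinal.lift.{u + 1} ((α : Ordinal.{u}).card + 1) := by
      rw [← Order.Iio_succ ((α : Ordinal.{u})), Ordinal.mk_Iio_ordinal, Ordinal.card_succ]
    have hθ : (α : Ordinal.{u}).card + 1 < lam :=
      Cardinal.add_lt_of_lt hlam (Cardinal.lt_ord.mp α.2)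
        (lt_of_lt_of_le Cardinal.one_lt_aleph0 hlam)
    calc #(ι → Set.Iic (α : Ordinal.{u}))
        = Cardinal.lift.{u} #(Set.Iic (α : Ordinal.{u})) ^ Cardinal.lift.{u + 1} #ι :=
          Cardinal.mk_arrow _ _
      _ = Cardinal.lift.{u + 1} ((((α : Ordinal.{u}).card + 1)) ^ #ι) := by
          rw [hIic, Cardinal.lift_lift, Cardinal.lift_power]
      _ ≤ Cardinal.lift.{u + 1} lam := Cardinal.lift_le.mpr (hpow _ hθ)
  calc #T = Cardinal.sum (fun α : Set.Iio lam.ord => #(ι → Set.Iic (α : Ordinal.{u}))) :=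
        Cardinal.mk_sigma _
    _ ≤ Cardinal.sum (fun _ : Set.Iio lam.ord => Cardinal.lift.{u + 1} lam) :=
        Cardinal.sum_le_sum _ _ hfiber
    _ = #(Set.Iio lam.ord) * Cardinal.lift.{u + 1} lam := Cardinal.sum_const' _ _
    _ = Cardinal.lift.{u + 1} lam * Cardinal.lift.{u + 1} lam := by
        rw [Ordinal.mk_Iio_ordinal, Cardinal.card_ord]
    _ = Cardinal.lift.{u + 1} lam := Cardinal.mul_eq_self (Cardinal.aleph0_le_lift.mpr hlam)
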